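/- Let C̄ : (−1/2, 1/2) → (self-adjoint linear maps Sym₂ → Sym₂) be measurable and essentially bounded, with C̄(t)Ā·Ā ≥ c|Ā|² for a.e. t and all Ā ∈ Sym₂, where c > 0. Define C̄⁽ⁱ⁾ := ∫_{−1/2}^{1/2} tⁱ C̄(t) dt for i = 0, 1, 2 (C̄⁽⁰⁾ is positive definite, hence invertible), and Ĉ := 12( C̄⁽²⁾ − C̄⁽¹⁾(C̄⁽⁰⁾)⁻¹C̄⁽¹⁾ ). Then for every Ā ∈ Sym₂, ĈĀ·Ā = 12 · min over B̄ ∈ Sym₂ of ∫_{−1/2}^{1/2} C̄(t)(B̄ + tĀ)·(B̄ + tĀ) dt. -/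

import Mathlib

open Matrix MeasureTheory
open scoped BigOperators

noncomputable section

/-- The space of real 2×2 matrices; symmetric ones form `Sym₂`. -/
abbrev M2 : Type := Matrix (Fin 2) (Fin 2) ℝ

/-- The Frobenius pairing `A·B := tr (A*B)`. -/
def dot2 (A B : M2) : ℝ := (A * B).trace

/-- The interval `(−1/2, 1/2)`. -/
def Ioo2 : Set ℝ := Set.Ioo (-(1:ℝ)/2) (1/2)

lemma dot2_eq_sum (A B : M2) : dot2 A B = ∑ α : Fin 2, ∑ β : Fin 2, A α β * B β α := by
  simp [dot2, Matrix.trace, Matrix.mul_apply, Matrix.diag]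

lemma dot2_comm (A B : M2) : dot2 A B = dot2 B A := Matrix.trace_mul_comm A B

lemma dot2_add_left (A B C : M2) : dot2 (A + B) C = dot2 A C + dot2 B C := by
  simp [dot2, Matrix.add_mul]

lemma dot2_sub_left (A B C : M2) : dot2 (A - B) C = dot2 A C - dot2 B C := by
  simp [dot2, Matrix.sub_mul]

lemma dot2_sub_right (A B C : M2) : dot2 C (A - B) = dot2 C A - dot2 C B := by
  simp [dot2, Matrix.mul_sub]

lemma dot2_neg_left (A C : M2) : dot2 (-A) C = - dot2 A C := by
  simp [dot2, Matrix.neg_mul]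

lemma dot2_smul_left (r : ℝ) (A C : M2) : dot2 (r • A) C = r * dot2 A C := by
  simp [dot2, Matrix.smul_mul, Matrix.trace_smul, smul_eq_mul]

lemma dot2_add_right (A B C : M2) : dot2 C (A + B) = dot2 C A + dot2 C B := by
  simp [dot2, Matrix.mul_add]

lemma dot2_smul_right (r : ℝ) (A C : M2) : dot2 C (r • A) = r * dot2 C A := by
  simp [dot2, Matrix.mul_smul, Matrix.trace_smul, smul_eq_mul]

lemma dot2_self_nonneg (A : M2) (hA : A.IsSymm) : 0 ≤ dot2 A A := by
  rw [dot2_eq_sum]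
  apply Finset.sum_nonneg; intro α _
  apply Finset.sum_nonneg; intro β _
  have : A β α = A α β := hA.apply α β
  rw [this]
  exact mul_self_nonneg _

/-- Let `C̄ : (−1/2,1/2) → (self-adjoint maps Sym₂ → Sym₂)` be a
measurable, essentially bounded, uniformly coercive field, let `C̄⁽ⁱ⁾` (i = 0,1,2) be its
moments, `D₀` the inverse of `C̄⁽⁰⁾` on `Sym₂`, and
`Ĉ := 12(C̄⁽²⁾ − C̄⁽¹⁾(C̄⁽⁰⁾)⁻¹C̄⁽¹⁾)`.  Then for every symmetric `Ā`,
`ĈĀ·Ā = 12 · min_{B̄ ∈ Sym₂} ∫ C̄(t)(B̄ + tĀ)·(B̄ + tĀ) dt`. -/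
theorem chat_quadForm_eq_twelve_min
    (Cb : ℝ → M2 →ₗ[ℝ] M2) (c : ℝ) (hc : 0 < c)
    (hmeas : ∀ (A : M2) (α β : Fin 2), Measurable fun t : ℝ => (Cb t A) α β)
    (hbd : ∃ K : ℝ, ∀ᵐ t ∂(volume.restrict Ioo2),
      ∀ (A : M2) (α β : Fin 2), |(Cb t A) α β| ≤ K * ∑ γ : Fin 2, ∑ δ : Fin 2, |A γ δ|)
    (hsymm : ∀ t ∈ Ioo2, ∀ A : M2, A.IsSymm → (Cb t A).IsSymm)
    (hsa : ∀ t ∈ Ioo2, ∀ A B : M2, A.IsSymm → B.IsSymm →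
      dot2 (Cb t A) B = dot2 A (Cb t B))
    (hcoer : ∀ᵐ t ∂(volume.restrict Ioo2), ∀ A : M2, A.IsSymm →
      c * dot2 A A ≤ dot2 (Cb t A) A)
    (C0 C1 C2 D0 : M2 →ₗ[ℝ] M2)
    (hC0 : ∀ (A : M2) (α β : Fin 2), (C0 A) α β = ∫ t in Ioo2, (Cb t A) α β)
    (hC1 : ∀ (A : M2) (α β : Fin 2), (C1 A) α β = ∫ t in Ioo2, t * (Cb t A) α β)
    (hC2 : ∀ (A : M2) (α β : Fin 2), (C2 A) α β = ∫ t in Ioo2, t ^ 2 * (Cb t A) α β)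
    (hD0symm : ∀ A : M2, A.IsSymm → (D0 A).IsSymm)
    (hD0l : ∀ A : M2, A.IsSymm → D0 (C0 A) = A)
    (hD0r : ∀ A : M2, A.IsSymm → C0 (D0 A) = A)
    (Ab : M2) (hA : Ab.IsSymm) :
    ∃ m : ℝ,
      IsLeast {x : ℝ | ∃ B : M2, B.IsSymm ∧
          x = ∫ t in Ioo2, dot2 (Cb t (B + t • Ab)) (B + t • Ab)} m
      ∧ dot2 ((12:ℝ) • (C2 Ab - C1 (D0 (C1 Ab)))) Ab = 12 * m := by
  obtain ⟨K, hK⟩ := hbd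
  have hIoo : MeasurableSet Ioo2 := measurableSet_Ioo
  have hvol : volume Ioo2 < ⊤ := by
    simpa [Ioo2] using (measure_Ioo_lt_top : volume (Set.Ioo (-(1:ℝ)/2) (1/2)) < ⊤)
  -- entry-wise integrability with a bounded weight
  have hintE : ∀ (g : ℝ → ℝ), Measurable g → (∀ t ∈ Ioo2, |g t| ≤ 1) →
      ∀ (X : M2) (α β : Fin 2),
      IntegrableOn (fun t => g t * (Cb t X) α β) Ioo2 := by
    intro g hgm hg1 X α β
    have hconst : IntegrableOn (fun _ : ℝ => K * ∑ γ : Fin 2, ∑ δ : Fin 2, |X γ δ|) Ioo2 :=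
      integrableOn_const hvol.ne
    refine hconst.mono' ((hgm.mul (hmeas X α β)).aestronglyMeasurable) ?_
    filter_upwards [hK, ae_restrict_mem hIoo] with t ht htm
    have h1 : |g t| ≤ 1 := hg1 t htm
    have h2 : |(Cb t X) α β| ≤ K * ∑ γ : Fin 2, ∑ δ : Fin 2, |X γ δ| := ht X α β
    calc ‖g t * (Cb t X) α β‖ = |g t| * |(Cb t X) α β| := abs_mul _ _
      _ ≤ 1 * (K * ∑ γ : Fin 2, ∑ δ : Fin 2, |X γ δ|) :=
          mul_le_mul h1 h2 (abs_nonneg _) zero_le_one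
      _ = K * ∑ γ : Fin 2, ∑ δ : Fin 2, |X γ δ| := one_mul _
  -- integrability of weighted quadratic forms
  have hintQ : ∀ (g : ℝ → ℝ), Measurable g → (∀ t ∈ Ioo2, |g t| ≤ 1) →
      ∀ (X Y : M2),
      IntegrableOn (fun t => g t * dot2 (Cb t X) Y) Ioo2 := by
    intro g hgm hg1 X Y
    have : (fun t => g t * dot2 (Cb t X) Y)
        = fun t => ∑ α : Fin 2, ∑ β : Fin 2, (g t * (Cb t X) α β) * Y β α := by
      funext t
      rw [dot2_eq_sum, Finset.mul_sum]
      congr 1; funext α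
      rw [Finset.mul_sum]
      congr 1; funext β; ring
    rw [this]
    apply integrable_finset_sum
    intro α _
    apply integrable_finset_sum
    intro β _
    exact (hintE g hgm hg1 X α β).mul_const _
  -- swap integral and dot2 : moments of the quadratic form
  have hmom : ∀ (g : ℝ → ℝ), Measurable g → (∀ t ∈ Ioo2, |g t| ≤ 1) →
      ∀ (D : M2 →ₗ[ℝ] M2),
      (∀ (A : M2) (α β : Fin 2), (D A) α β = ∫ t in Ioo2, g t * (Cb t A) α β) →
      ∀ X Y : M2, (∫ t in Ioo2, g t * dot2 (Cb t X) Y) = dot2 (D X) Y := by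
    intro g hgm hg1 D hD X Y
    have h1 : (∫ t in Ioo2, g t * dot2 (Cb t X) Y)
        = ∫ t in Ioo2, ∑ α : Fin 2, ∑ β : Fin 2, (g t * (Cb t X) α β) * Y β α := by
      congr 1; funext t
      rw [dot2_eq_sum, Finset.mul_sum]
      congr 1; funext α
      rw [Finset.mul_sum]
      congr 1; funext β; ring
    rw [h1, integral_finset_sum]
    · rw [dot2_eq_sum]
      congr 1; funext α
      rw [integral_finset_sum]
      · congr 1; funext β
        rw [MeasureTheory.integral_mul_const, hD X α β]
      · intro β _
        exact (hintE g hgm hg1 X α β).mul_const _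
    · intro α _
      apply integrable_finset_sum
      intro β _
      exact (hintE g hgm hg1 X α β).mul_const _
  -- the three weights
  have hg0 : Measurable (fun _ : ℝ => (1:ℝ)) := measurable_const
  have hg0b : ∀ t ∈ Ioo2, |(1:ℝ)| ≤ 1 := by intro t _; simp
  have hg1m : Measurable (fun t : ℝ => t) := measurable_id
  have hg1b : ∀ t ∈ Ioo2, |t| ≤ 1 := by
    intro t ht
    rcases ht with ⟨h1, h2⟩
    rw [abs_le]; constructor <;> linarith
  have hg2m : Measurable (fun t : ℝ => t ^ 2) := measurable_id.pow_const 2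
  have hg2b : ∀ t ∈ Ioo2, |t ^ 2| ≤ 1 := by
    intro t ht
    have h := abs_le.mp (hg1b t ht)
    rw [abs_of_nonneg (sq_nonneg t)]
    nlinarith [h.1, h.2]
  have hC0' : ∀ (A : M2) (α β : Fin 2), (C0 A) α β = ∫ t in Ioo2, (1:ℝ) * (Cb t A) α β := by
    intro A α β; simpa using hC0 A α β
  -- moment identities
  have hmom0 : ∀ X Y : M2, (∫ t in Ioo2, dot2 (Cb t X) Y) = dot2 (C0 X) Y := by
    intro X Y
    have := hmom _ hg0 hg0b C0 hC0' X Y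
    simpa using this
  have hmom1 : ∀ X Y : M2, (∫ t in Ioo2, t * dot2 (Cb t X) Y) = dot2 (C1 X) Y :=
    hmom _ hg1m hg1b C1 hC1
  have hmom2 : ∀ X Y : M2, (∫ t in Ioo2, t ^ 2 * dot2 (Cb t X) Y) = dot2 (C2 X) Y :=
    hmom _ hg2m hg2b C2 hC2
  -- pointwise self-adjointness transfer
  have hswap : ∀ t ∈ Ioo2, ∀ X Y : M2, X.IsSymm → Y.IsSymm →
      dot2 (Cb t X) Y = dot2 (Cb t Y) X := by
    intro t ht X Y hX hY
    rw [hsa t ht X Y hX hY, dot2_comm]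
  -- symmetry of the moment operators on symmetric matrices
  have hsymMom : ∀ (g : ℝ → ℝ), Measurable g → (∀ t ∈ Ioo2, |g t| ≤ 1) →
      ∀ (D : M2 →ₗ[ℝ] M2),
      (∀ (A : M2) (α β : Fin 2), (D A) α β = ∫ t in Ioo2, g t * (Cb t A) α β) →
      ∀ X Y : M2, X.IsSymm → Y.IsSymm → dot2 (D X) Y = dot2 (D Y) X := by
    intro g hgm hg1 D hD X Y hX hY
    rw [← hmom g hgm hg1 D hD X Y, ← hmom g hgm hg1 D hD Y X]
    apply setIntegral_congr_fun hIoo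
    intro t ht
    simp only
    rw [hswap t ht X Y hX hY]
  have hsym0 : ∀ X Y : M2, X.IsSymm → Y.IsSymm → dot2 (C0 X) Y = dot2 (C0 Y) X :=
    hsymMom _ hg0 hg0b C0 hC0'
  have hsym1 : ∀ X Y : M2, X.IsSymm → Y.IsSymm → dot2 (C1 X) Y = dot2 (C1 Y) X :=
    hsymMom _ hg1m hg1b C1 hC1
  -- C1 Ab is symmetric
  have hC1A_symm : (C1 Ab).IsSymm := by
    rw [Matrix.IsSymm]
    ext α β
    rw [Matrix.transpose_apply, hC1 Ab β α, hC1 Ab α β]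
    apply setIntegral_congr_fun hIoo
    intro t ht
    simp only
    rw [(hsymm t ht Ab hA).apply α β]
  set Bs : M2 := -(D0 (C1 Ab)) with hBs_def
  have hBs_symm : Bs.IsSymm := (hD0symm _ hC1A_symm).neg
  have hC0Bs : C0 Bs = -(C1 Ab) := by
    rw [hBs_def, map_neg, hD0r _ hC1A_symm]
  set m : ℝ := dot2 (C2 Ab) Ab + dot2 (C1 Ab) Bs with hm_def
  -- expansion of the functional
  have hF : ∀ B : M2, B.IsSymm →
      (∫ t in Ioo2, dot2 (Cb t (B + t • Ab)) (B + t • Ab))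
        = dot2 (C0 B) B + 2 * dot2 (C1 Ab) B + dot2 (C2 Ab) Ab := by
    intro B hB
    have hexp : ∀ t : ℝ, dot2 (Cb t (B + t • Ab)) (B + t • Ab)
        = dot2 (Cb t B) B + t * dot2 (Cb t B) Ab
          + t * dot2 (Cb t Ab) B + t ^ 2 * dot2 (Cb t Ab) Ab := by
      intro t
      rw [map_add, _root_.map_smul]
      rw [dot2_add_left, dot2_add_right, dot2_add_right,
        dot2_smul_left, dot2_smul_right, dot2_smul_right, dot2_smul_left]
      ring
    have h1 : (∫ t in Ioo2, dot2 (Cb t (B + t • Ab)) (B + t • Ab))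
        = ∫ t in Ioo2, (dot2 (Cb t B) B + t * dot2 (Cb t B) Ab
          + t * dot2 (Cb t Ab) B + t ^ 2 * dot2 (Cb t Ab) Ab) := by
      congr 1; funext t; exact hexp t
    have i0 : IntegrableOn (fun t => dot2 (Cb t B) B) Ioo2 := by
      have := hintQ _ hg0 hg0b B B
      simpa using this
    have i1 : IntegrableOn (fun t => t * dot2 (Cb t B) Ab) Ioo2 := hintQ _ hg1m hg1b B Ab
    have i2 : IntegrableOn (fun t => t * dot2 (Cb t Ab) B) Ioo2 := hintQ _ hg1m hg1b Ab B
    have i3 : IntegrableOn (fun t => t ^ 2 * dot2 (Cb t Ab) Ab) Ioo2 := hintQ _ hg2m hg2b Ab Ab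
    have i01 : IntegrableOn (fun t => dot2 (Cb t B) B + t * dot2 (Cb t B) Ab) Ioo2 :=
      i0.add i1
    have i012 : IntegrableOn
        (fun t => dot2 (Cb t B) B + t * dot2 (Cb t B) Ab + t * dot2 (Cb t Ab) B) Ioo2 :=
      i01.add i2
    rw [h1, integral_add i012 i3, integral_add i01 i2, integral_add i0 i1,
      hmom0, hmom1, hmom1, hmom2, hsym1 B Ab hB hA]
    ring
  -- value at the minimizer
  have hFBs : (∫ t in Ioo2, dot2 (Cb t (Bs + t • Ab)) (Bs + t • Ab)) = m := by
    rw [hF Bs hBs_symm, hC0Bs, dot2_neg_left, hm_def]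
    ring
  -- nonnegativity of the C0 quadratic form
  have hpos : ∀ X : M2, X.IsSymm → 0 ≤ dot2 (C0 X) X := by
    intro X hX
    rw [← hmom0 X X]
    apply integral_nonneg_of_ae
    filter_upwards [hcoer] with t ht
    have h1 := ht X hX
    have h2 : 0 ≤ c * dot2 X X := mul_nonneg hc.le (dot2_self_nonneg X hX)
    exact le_trans h2 h1
  -- lower bound
  have hlb : ∀ B : M2, B.IsSymm →
      m ≤ ∫ t in Ioo2, dot2 (Cb t (B + t • Ab)) (B + t • Ab) := by
    intro B hB
    rw [hF B hB]
    have hBBs : (B - Bs).IsSymm := hB.sub hBs_symm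
    have key : dot2 (C0 (B - Bs)) (B - Bs)
        = dot2 (C0 B) B + 2 * dot2 (C1 Ab) B - dot2 (C1 Ab) Bs := by
      have e2 : dot2 (C0 B) Bs = - dot2 (C1 Ab) B := by
        rw [hsym0 B Bs hB hBs_symm, hC0Bs, dot2_neg_left]
      have e3 : dot2 (C0 Bs) B = - dot2 (C1 Ab) B := by
        rw [hC0Bs, dot2_neg_left]
      have e4 : dot2 (C0 Bs) Bs = - dot2 (C1 Ab) Bs := by
        rw [hC0Bs, dot2_neg_left]
      rw [map_sub, dot2_sub_left, dot2_sub_right, dot2_sub_right, e2, e3, e4]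
      ring
    have h0 := hpos (B - Bs) hBBs
    rw [key] at h0
    rw [hm_def]
    linarith
  refine ⟨m, ⟨⟨Bs, hBs_symm, hFBs.symm⟩, ?_⟩, ?_⟩
  · rintro x ⟨B, hBsym, rfl⟩
    exact hlb B hBsym
  · rw [dot2_smul_left, dot2_sub_left]
    have : dot2 (C1 (D0 (C1 Ab))) Ab = dot2 (C1 Ab) (D0 (C1 Ab)) := by
      rw [hsym1 (D0 (C1 Ab)) Ab (hD0symm _ hC1A_symm) hA, dot2_comm]
    rw [this, hm_def]
    have hBsneg : dot2 (C1 Ab) Bs = - dot2 (C1 Ab) (D0 (C1 Ab)) := by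
      rw [hBs_def, show -(D0 (C1 Ab)) = (-1:ℝ) • (D0 (C1 Ab)) by simp, dot2_smul_right]
      ring
    rw [hBsneg]
    ring
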